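/- Let H be a real Hilbert space, let G be a group of orthogonal transformations (linear isometric automorphisms) of H, and let W and R be G-stable subsets of H such that W is weakly compact and, for every natural number k, the orbit space R^k/G (the quotient of R^k, with the topology induced by the Hilbert norm, by the diagonal G-action) is compact. Then the pseudometric space (W, d_R/G) is compact, where (d_R/G)(x,y) = inf_{g∈G} d_R(x, g·y); equivalently, the orbit space (W, d_R)/G is compact. -/

import Mathlib

open scoped InnerProductSpace
open Filter

noncomputable section

/-- The topology induced by a pseudometric `d` : the one generated by the open balls of `d`. -/
def ballTopology {X : Type*} (d : X → X → ℝ) : TopologicalSpace X :=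
  TopologicalSpace.generateFrom {s | ∃ x ε, 0 < ε ∧ s = {y | d x y < ε}}

/-- The seminorm `‖x‖_R = sup_{r ∈ R} |⟨r,x⟩|` associated to a bounded set `R`. -/
def normR {H : Type*} [NormedAddCommGroup H] [InnerProductSpace ℝ H] (R : Set H) (x : H) : ℝ :=
  ⨆ r : R, |⟪(r : H), x⟫_ℝ|

/-- The pseudometric `d_R(x,y) = ‖x - y‖_R`. -/
def dR {H : Type*} [NormedAddCommGroup H] [InnerProductSpace ℝ H] (R : Set H) (x y : H) : ℝ :=
  normR R (x - y)


section Aux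

variable {H : Type*} [NormedAddCommGroup H] [InnerProductSpace ℝ H]
variable {R : Set H} {C : ℝ}

lemma bddAbove_inner (hC : ∀ r ∈ R, ‖r‖ ≤ C) (x : H) :
    BddAbove (Set.range fun r : R => |⟪(r : H), x⟫_ℝ|) := by
  refine ⟨C * ‖x‖, ?_⟩
  rintro _ ⟨r, rfl⟩
  exact (abs_real_inner_le_norm _ _).trans
    (mul_le_mul_of_nonneg_right (hC r r.2) (norm_nonneg x))

lemma normR_nonneg (R : Set H) (x : H) : 0 ≤ normR R x :=
  Real.iSup_nonneg fun _ => abs_nonneg _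

lemma inner_le_normR (hC : ∀ r ∈ R, ‖r‖ ≤ C) {r : H} (hr : r ∈ R) (x : H) :
    |⟪r, x⟫_ℝ| ≤ normR R x :=
  le_ciSup (bddAbove_inner hC x) (⟨r, hr⟩ : R)

lemma normR_le_mul_norm (hC : ∀ r ∈ R, ‖r‖ ≤ C) (hC0 : 0 ≤ C) (x : H) :
    normR R x ≤ C * ‖x‖ := by
  rcases isEmpty_or_nonempty R with h | h
  · rw [normR, Real.iSup_of_isEmpty]
    positivity
  · exact ciSup_le fun r => (abs_real_inner_le_norm _ _).trans
      (mul_le_mul_of_nonneg_right (hC r r.2) (norm_nonneg x))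

lemma normR_zero (R : Set H) : normR R 0 = 0 := by
  refine le_antisymm (Real.iSup_nonpos fun r => ?_) (normR_nonneg R 0)
  simp

lemma normR_neg (R : Set H) (x : H) : normR R (-x) = normR R x := by
  unfold normR
  simp [inner_neg_right, abs_neg]

lemma normR_add (hC : ∀ r ∈ R, ‖r‖ ≤ C) (x y : H) :
    normR R (x + y) ≤ normR R x + normR R y := by
  rcases isEmpty_or_nonempty R with h | h
  · rw [normR, Real.iSup_of_isEmpty]
    have := normR_nonneg R x; have := normR_nonneg R y; linarith
  · refine ciSup_le fun r => ?_
    calc |⟪(r : H), x + y⟫_ℝ| = |⟪(r : H), x⟫_ℝ + ⟪(r : H), y⟫_ℝ| := by rw [inner_add_right]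
      _ ≤ |⟪(r : H), x⟫_ℝ| + |⟪(r : H), y⟫_ℝ| := abs_add_le _ _
      _ ≤ _ := add_le_add (inner_le_normR hC r.2 x) (inner_le_normR hC r.2 y)

lemma dR_comm (hC : ∀ r ∈ R, ‖r‖ ≤ C) (x y : H) : dR R x y = dR R y x := by
  unfold dR
  rw [← normR_neg R (x - y), neg_sub]

lemma dR_triangle (hC : ∀ r ∈ R, ‖r‖ ≤ C) (x y z : H) :
    dR R x z ≤ dR R x y + dR R y z := by
  unfold dR
  have : x - z = (x - y) + (y - z) := by abel
  rw [this]
  exact normR_add hC _ _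

lemma dR_nonneg (R : Set H) (x y : H) : 0 ≤ dR R x y := normR_nonneg _ _

lemma dR_self (R : Set H) (x : H) : dR R x x = 0 := by
  unfold dR; rw [sub_self, normR_zero]

end Aux
section Grp

variable {H : Type*} [NormedAddCommGroup H] [InnerProductSpace ℝ H]
variable {R : Set H} {C : ℝ} {G : Subgroup (H ≃ₗᵢ[ℝ] H)}

/-- `ρ(x,y) = inf_g d_R(x, g y)`. -/
def rho (G : Subgroup (H ≃ₗᵢ[ℝ] H)) (R : Set H) (x y : H) : ℝ :=
  ⨅ g : G, dR R x ((g : H ≃ₗᵢ[ℝ] H) y)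

lemma coe_inv_apply_apply (g : G) (y : H) :
    ((g⁻¹ : G) : H ≃ₗᵢ[ℝ] H) (((g : G) : H ≃ₗᵢ[ℝ] H) y) = y := by
  have h : (((g⁻¹ * g : G) : H ≃ₗᵢ[ℝ] H)) y = y := by
    rw [inv_mul_cancel]; rfl
  simpa [LinearIsometryEquiv.coe_mul] using h

lemma coe_apply_inv_apply (g : G) (y : H) :
    ((g : G) : H ≃ₗᵢ[ℝ] H) (((g⁻¹ : G) : H ≃ₗᵢ[ℝ] H) y) = y := by
  have h : (((g * g⁻¹ : G) : H ≃ₗᵢ[ℝ] H)) y = y := by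
    rw [mul_inv_cancel]; rfl
  simpa [LinearIsometryEquiv.coe_mul] using h

lemma coe_mul_apply (g h : G) (y : H) :
    ((g * h : G) : H ≃ₗᵢ[ℝ] H) y = (g : H ≃ₗᵢ[ℝ] H) ((h : H ≃ₗᵢ[ℝ] H) y) := by
  simp [LinearIsometryEquiv.coe_mul]

lemma normR_isom (hC : ∀ r ∈ R, ‖r‖ ≤ C)
    (hst : ∀ g ∈ G, ∀ r ∈ R, g r ∈ R) (g : G) (x : H) :
    normR R ((g : H ≃ₗᵢ[ℝ] H) x) = normR R x := by
  rcases isEmpty_or_nonempty R with h | h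
  · rw [normR, normR, Real.iSup_of_isEmpty, Real.iSup_of_isEmpty]
  · refine le_antisymm (ciSup_le fun r => ?_) (ciSup_le fun r => ?_)
    · have hmem : ((g⁻¹ : G) : H ≃ₗᵢ[ℝ] H) (r : H) ∈ R := hst _ (g⁻¹ : G).2 _ r.2
      have e : ⟪(r : H), (g : H ≃ₗᵢ[ℝ] H) x⟫_ℝ
          = ⟪((g⁻¹ : G) : H ≃ₗᵢ[ℝ] H) (r : H), x⟫_ℝ := by
        conv_lhs => rw [← coe_apply_inv_apply g (r : H)]
        exact LinearIsometryEquiv.inner_map_map _ _ _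
      rw [e]
      exact inner_le_normR hC hmem x
    · have hmem : ((g : G) : H ≃ₗᵢ[ℝ] H) (r : H) ∈ R := hst _ g.2 _ r.2
      have e : ⟪(r : H), x⟫_ℝ
          = ⟪((g : G) : H ≃ₗᵢ[ℝ] H) (r : H), (g : H ≃ₗᵢ[ℝ] H) x⟫_ℝ :=
        (LinearIsometryEquiv.inner_map_map _ _ _).symm
      rw [e]
      exact inner_le_normR hC hmem _

lemma dR_isom (hC : ∀ r ∈ R, ‖r‖ ≤ C)
    (hst : ∀ g ∈ G, ∀ r ∈ R, g r ∈ R) (g : G) (x y : H) :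
    dR R ((g : H ≃ₗᵢ[ℝ] H) x) ((g : H ≃ₗᵢ[ℝ] H) y) = dR R x y := by
  unfold dR
  rw [← map_sub (g : H ≃ₗᵢ[ℝ] H) x y, normR_isom hC hst]

lemma bddBelow_rho (R : Set H) (x y : H) :
    BddBelow (Set.range fun g : G => dR R x ((g : H ≃ₗᵢ[ℝ] H) y)) := by
  refine ⟨0, ?_⟩
  rintro _ ⟨g, rfl⟩
  exact dR_nonneg R _ _

lemma rho_nonneg (G : Subgroup (H ≃ₗᵢ[ℝ] H)) (R : Set H) (x y : H) : 0 ≤ rho G R x y := by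
  haveI : Nonempty G := ⟨1⟩
  exact le_ciInf fun g => dR_nonneg R _ _

lemma rho_le (g : G) (x y : H) : rho G R x y ≤ dR R x ((g : H ≃ₗᵢ[ℝ] H) y) :=
  ciInf_le (bddBelow_rho R x y) g

lemma rho_self (G : Subgroup (H ≃ₗᵢ[ℝ] H)) (R : Set H) (x : H) : rho G R x x = 0 := by
  refine le_antisymm ?_ (rho_nonneg G R x x)
  have h := rho_le (G := G) (R := R) 1 x x
  simpa [dR_self] using h

lemma rho_le_dR (hC : ∀ r ∈ R, ‖r‖ ≤ C)
    (hst : ∀ g ∈ G, ∀ r ∈ R, g r ∈ R) (h : G) (x y : H) :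
    rho G R x y ≤ dR R ((h : H ≃ₗᵢ[ℝ] H) x) y := by
  have e : dR R ((h : H ≃ₗᵢ[ℝ] H) x) y = dR R x (((h⁻¹ : G) : H ≃ₗᵢ[ℝ] H) y) := by
    rw [← dR_isom hC hst h⁻¹ ((h : H ≃ₗᵢ[ℝ] H) x) y, coe_inv_apply_apply]
  rw [e]
  exact rho_le h⁻¹ x y

lemma rho_comm (hC : ∀ r ∈ R, ‖r‖ ≤ C)
    (hst : ∀ g ∈ G, ∀ r ∈ R, g r ∈ R) (x y : H) :
    rho G R x y = rho G R y x := by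
  haveI : Nonempty G := ⟨1⟩
  have key : ∀ x y : H, rho G R y x ≤ rho G R x y := by
    intro x y
    refine le_ciInf fun g => ?_
    calc rho G R y x ≤ dR R y (((g⁻¹ : G) : H ≃ₗᵢ[ℝ] H) x) := rho_le g⁻¹ y x
      _ = dR R (((g⁻¹ : G) : H ≃ₗᵢ[ℝ] H) x) y := dR_comm hC _ _
      _ = dR R (((g⁻¹ : G) : H ≃ₗᵢ[ℝ] H) x)
            (((g⁻¹ : G) : H ≃ₗᵢ[ℝ] H) ((g : H ≃ₗᵢ[ℝ] H) y)) := by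
          rw [coe_inv_apply_apply]
      _ = dR R x ((g : H ≃ₗᵢ[ℝ] H) y) := dR_isom hC hst g⁻¹ _ _
  exact le_antisymm (key y x) (key x y)

lemma rho_triangle (hC : ∀ r ∈ R, ‖r‖ ≤ C)
    (hst : ∀ g ∈ G, ∀ r ∈ R, g r ∈ R) (x y z : H) :
    rho G R x z ≤ rho G R x y + rho G R y z := by
  haveI : Nonempty G := ⟨1⟩
  have step : ∀ h : G, rho G R x z ≤ rho G R x y + dR R y ((h : H ≃ₗᵢ[ℝ] H) z) := by
    intro h
    have h1 : ∀ g : G, rho G R x z - dR R y ((h : H ≃ₗᵢ[ℝ] H) z)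
        ≤ dR R x ((g : H ≃ₗᵢ[ℝ] H) y) := by
      intro g
      have h2 : rho G R x z ≤ dR R x (((g * h : G) : H ≃ₗᵢ[ℝ] H) z) := rho_le (g * h) x z
      rw [coe_mul_apply] at h2
      have h3 : dR R x ((g : H ≃ₗᵢ[ℝ] H) ((h : H ≃ₗᵢ[ℝ] H) z))
          ≤ dR R x ((g : H ≃ₗᵢ[ℝ] H) y)
            + dR R ((g : H ≃ₗᵢ[ℝ] H) y) ((g : H ≃ₗᵢ[ℝ] H) ((h : H ≃ₗᵢ[ℝ] H) z)) :=
        dR_triangle hC _ _ _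
      have h4 : dR R ((g : H ≃ₗᵢ[ℝ] H) y) ((g : H ≃ₗᵢ[ℝ] H) ((h : H ≃ₗᵢ[ℝ] H) z))
          = dR R y ((h : H ≃ₗᵢ[ℝ] H) z) := dR_isom hC hst g _ _
      linarith
    have h5 : rho G R x z - dR R y ((h : H ≃ₗᵢ[ℝ] H) z) ≤ rho G R x y := le_ciInf h1
    linarith
  have h6 : ∀ h : G, rho G R x z - rho G R x y ≤ dR R y ((h : H ≃ₗᵢ[ℝ] H) z) := by
    intro h; linarith [step h]
  have h7 : rho G R x z - rho G R x y ≤ rho G R y z := le_ciInf h6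
  linarith

end Grp
section Greedy

variable {H : Type*} [NormedAddCommGroup H] [InnerProductSpace ℝ H]
variable {R : Set H} {C : ℝ}

lemma greedy (hne : R.Nonempty) (hC : ∀ r ∈ R, ‖r‖ ≤ C) (hC1 : 1 ≤ C)
    {ε : ℝ} (hε : 0 < ε) :
    ∀ (n : ℕ) (y : H), ‖y‖ ≤ C → ‖y‖ ^ 2 ≤ n * (ε ^ 2 / C ^ 2) →
    ∃ (a : Fin n → ℝ) (r : Fin n → H), (∀ i, r i ∈ R) ∧ (∀ i, |a i| ≤ C ^ 2 / ε) ∧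
      normR R (y - ∑ i, a i • r i) ≤ ε := by
  have hC0 : (0 : ℝ) < C := lt_of_lt_of_le one_pos hC1
  intro n
  induction n with
  | zero =>
    intro y hyC hy2
    have hy0 : y = 0 := by
      have h1 : ‖y‖ ^ 2 ≤ 0 := by simpa using hy2
      have h2 : ‖y‖ = 0 := by nlinarith [norm_nonneg y]
      simpa using h2
    refine ⟨fun i => i.elim0, fun i => i.elim0, fun i => i.elim0, fun i => i.elim0, ?_⟩
    simp [hy0, normR_zero, hε.le]
  | succ n ih =>
    intro y hyC hy2
    by_cases hle : normR R y ≤ ε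
    · obtain ⟨r₀, hr₀⟩ := hne
      refine ⟨fun _ => 0, fun _ => r₀, fun _ => hr₀, fun i => by simp; positivity, ?_⟩
      simpa using hle
    · push_neg at hle
      haveI : Nonempty R := hne.to_subtype
      obtain ⟨r, hr⟩ := exists_lt_of_lt_ciSup (show ε < ⨆ r : R, |⟪(r : H), y⟫_ℝ| from hle)
      set t : ℝ := ⟪(r : H), y⟫_ℝ with ht
      have htabs : ε < |t| := hr
      have hrR : (r : H) ∈ R := r.2
      have hrC : ‖(r : H)‖ ≤ C := hC _ hrR
      have hrpos : 0 < ‖(r : H)‖ := by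
        rcases eq_or_lt_of_le (norm_nonneg (r : H)) with h | h
        · have h0 : (r : H) = 0 := norm_eq_zero.mp h.symm
          have ht0 : t = 0 := by rw [ht, h0, inner_zero_left]
          rw [ht0] at htabs
          simp at htabs
          linarith
        · exact h
      have hrlow : ε / C ≤ ‖(r : H)‖ := by
        have h1 : |t| ≤ ‖(r : H)‖ * ‖y‖ := abs_real_inner_le_norm _ _
        have h2 : ε < ‖(r : H)‖ * C :=
          htabs.trans_le (h1.trans (mul_le_mul_of_nonneg_left hyC (norm_nonneg _)))
        rw [div_le_iff₀ hC0]
        linarith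
      set γ : ℝ := t / ‖(r : H)‖ ^ 2 with hγ
      set y' : H := y - γ • (r : H) with hy'
      have hkey : ‖y'‖ ^ 2 = ‖y‖ ^ 2 - t ^ 2 / ‖(r : H)‖ ^ 2 := by
        have hexp : ‖y - γ • (r : H)‖ ^ 2
            = ‖y‖ ^ 2 - 2 * (γ * t) + γ ^ 2 * ‖(r : H)‖ ^ 2 := by
          rw [norm_sub_sq_real]
          have e1 : ⟪y, γ • (r : H)⟫_ℝ = γ * t := by
            rw [inner_smul_right, ht, real_inner_comm]
          have e2 : ‖γ • (r : H)‖ ^ 2 = γ ^ 2 * ‖(r : H)‖ ^ 2 := by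
            rw [norm_smul, mul_pow, Real.norm_eq_abs, sq_abs]
          rw [e1, e2]
        rw [hy', hexp, hγ]
        field_simp
        ring
      have hsq : ε ^ 2 ≤ t ^ 2 := by nlinarith [sq_abs t, abs_nonneg t]
      have hquot : ε ^ 2 / C ^ 2 ≤ t ^ 2 / ‖(r : H)‖ ^ 2 :=
        div_le_div₀ (sq_nonneg t) hsq (by positivity)
          (by nlinarith [norm_nonneg (r : H)])
      have hy'2 : ‖y'‖ ^ 2 ≤ n * (ε ^ 2 / C ^ 2) := by
        rw [hkey]
        push_cast at hy2 ⊢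
        linarith
      have hy'le : ‖y'‖ ≤ ‖y‖ := by
        have h1 : ‖y'‖ ^ 2 ≤ ‖y‖ ^ 2 := by
          rw [hkey]
          have h2 : 0 ≤ t ^ 2 / ‖(r : H)‖ ^ 2 := by positivity
          linarith
        exact le_of_pow_le_pow_left₀ two_ne_zero (norm_nonneg y) h1
      have hγabs : |γ| ≤ C ^ 2 / ε := by
        have h1 : |γ| = |t| / ‖(r : H)‖ ^ 2 := by
          rw [hγ, abs_div, abs_pow, abs_norm]
        have h2 : |t| ≤ ‖(r : H)‖ * C :=
          (abs_real_inner_le_norm _ _).trans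
            (mul_le_mul_of_nonneg_left hyC (norm_nonneg _))
        have h3 : |γ| ≤ C / ‖(r : H)‖ := by
          rw [h1, div_le_div_iff₀ (by positivity) hrpos]
          calc |t| * ‖(r : H)‖ ≤ (‖(r : H)‖ * C) * ‖(r : H)‖ :=
                mul_le_mul_of_nonneg_right h2 (norm_nonneg _)
            _ = C * ‖(r : H)‖ ^ 2 := by ring
        have h4 : C / ‖(r : H)‖ ≤ C / (ε / C) :=
          div_le_div_of_nonneg_left hC0.le (by positivity) hrlow
        have h5 : C / (ε / C) = C ^ 2 / ε := by
          field_simp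
        linarith
      obtain ⟨a', r', hr'R, ha', happrox⟩ := ih y' (hy'le.trans hyC) hy'2
      refine ⟨(Fin.cons γ a' : Fin (n + 1) → ℝ),
        (Fin.cons (r : H) r' : Fin (n + 1) → H), ?_, ?_, ?_⟩
      · intro i
        refine Fin.cases ?_ ?_ i
        · simpa using hrR
        · intro j; simpa using hr'R j
      · intro i
        refine Fin.cases ?_ ?_ i
        · simpa using hγabs
        · intro j; simpa using ha' j
      · have hfun : (fun i : Fin (n + 1) =>
            (Fin.cons γ a' : Fin (n + 1) → ℝ) i • (Fin.cons (r : H) r' : Fin (n + 1) → H) i)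
            = Fin.cons (γ • (r : H)) (fun i => a' i • r' i) := by
          funext i
          refine Fin.cases ?_ ?_ i <;> simp
        have hsum : (∑ i, (Fin.cons γ a' : Fin (n + 1) → ℝ) i
              • (Fin.cons (r : H) r' : Fin (n + 1) → H) i)
            = γ • (r : H) + ∑ i, a' i • r' i := by
          rw [hfun, Fin.sum_cons]
        rw [hsum]
        have heq : y - (γ • (r : H) + ∑ i, a' i • r' i) = y' - ∑ i, a' i • r' i := by
          rw [hy']; abel
        rw [heq]
        exact happrox

end Greedy
section Bounds

lemma ballTopology_net {X : Type*} (d : X → X → ℝ) (S : Set X)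
    (hcpt : @IsCompact X (ballTopology d) S) (hself : ∀ x ∈ S, d x x ≤ 0)
    {δ : ℝ} (hδ : 0 < δ) :
    ∃ t : Finset X, ∀ x ∈ S, ∃ c ∈ t, d c x < δ := by
  letI : TopologicalSpace X := ballTopology d
  have hopen : ∀ c : X, IsOpen {y | d c y < δ} := fun c =>
    TopologicalSpace.isOpen_generateFrom_of_mem ⟨c, δ, hδ, rfl⟩
  have hcover : S ⊆ ⋃ c : X, {y | d c y < δ} := fun x hx =>
    Set.mem_iUnion.mpr ⟨x, lt_of_le_of_lt (hself x hx) hδ⟩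
  obtain ⟨t, ht⟩ := hcpt.elim_finite_subcover _ hopen hcover
  exact ⟨t, fun x hx => by simpa using ht hx⟩

variable {H : Type*} [NormedAddCommGroup H] [InnerProductSpace ℝ H]

lemma dtuple_nonneg {k : ℕ} (G : Subgroup (H ≃ₗᵢ[ℝ] H)) (x y : Fin k → H) :
    0 ≤ ⨅ g : G, ⨆ i, ‖x i - (g : H ≃ₗᵢ[ℝ] H) (y i)‖ := by
  haveI : Nonempty G := ⟨1⟩
  exact le_ciInf fun g => Real.iSup_nonneg fun i => norm_nonneg _

lemma dtuple_self_nonpos {k : ℕ} (G : Subgroup (H ≃ₗᵢ[ℝ] H)) (x : Fin k → H) :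
    (⨅ g : G, ⨆ i, ‖x i - (g : H ≃ₗᵢ[ℝ] H) (x i)‖) ≤ 0 := by
  haveI : Nonempty G := ⟨1⟩
  have hbdd : BddBelow (Set.range fun g : G => ⨆ i, ‖x i - (g : H ≃ₗᵢ[ℝ] H) (x i)‖) := by
    refine ⟨0, ?_⟩
    rintro _ ⟨g, rfl⟩
    exact Real.iSup_nonneg fun i => norm_nonneg _
  refine ciInf_le_of_le hbdd 1 ?_
  refine Real.iSup_nonpos fun i => ?_
  simp

lemma Rbound (G : Subgroup (H ≃ₗᵢ[ℝ] H)) (R : Set H)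
    (hR1 : @IsCompact (Fin 1 → H)
      (ballTopology (fun x y => ⨅ g : G, ⨆ i, ‖x i - (g : H ≃ₗᵢ[ℝ] H) (y i)‖))
      {x | ∀ i, x i ∈ R}) :
    ∃ C : ℝ, 1 ≤ C ∧ ∀ r ∈ R, ‖r‖ ≤ C := by
  haveI : Nonempty G := ⟨1⟩
  obtain ⟨t, ht⟩ := ballTopology_net _ _ hR1
    (fun x _ => dtuple_self_nonpos G x) one_pos
  have hsum : (0:ℝ) ≤ ∑ c ∈ t, ‖c 0‖ := Finset.sum_nonneg fun c _ => norm_nonneg (c 0)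
  refine ⟨1 + ∑ c ∈ t, ‖c 0‖, by linarith, fun r hr => ?_⟩
  obtain ⟨c, hct, hcd⟩ := ht (fun _ => r) (fun _ => hr)
  obtain ⟨g, hg⟩ := exists_lt_of_ciInf_lt hcd
  have h0 : ‖c 0 - (g : H ≃ₗᵢ[ℝ] H) r‖ < 1 := by
    refine lt_of_le_of_lt ?_ hg
    exact le_ciSup (f := fun i : Fin 1 => ‖c i - (g : H ≃ₗᵢ[ℝ] H) r‖)
      ((Set.finite_range _).bddAbove) 0
  have hnorm : ‖r‖ = ‖(g : H ≃ₗᵢ[ℝ] H) r‖ := ((g : H ≃ₗᵢ[ℝ] H).norm_map r).symm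
  have h1 : ‖(g : H ≃ₗᵢ[ℝ] H) r‖ ≤ ‖c 0 - (g : H ≃ₗᵢ[ℝ] H) r‖ + ‖c 0‖ := by
    have he : (g : H ≃ₗᵢ[ℝ] H) r = c 0 - (c 0 - (g : H ≃ₗᵢ[ℝ] H) r) := by abel
    have he' : ‖(g : H ≃ₗᵢ[ℝ] H) r‖ = ‖c 0 - (c 0 - (g : H ≃ₗᵢ[ℝ] H) r)‖ :=
      congrArg norm he
    have h'' := norm_sub_le (c 0) (c 0 - (g : H ≃ₗᵢ[ℝ] H) r)
    linarith
  have h2 : ‖c 0‖ ≤ ∑ c ∈ t, ‖c 0‖ :=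
    Finset.single_le_sum (fun c _ => norm_nonneg (c 0)) hct
  linarith

lemma Wbound {W : Set H} [CompleteSpace H] (hW : IsCompact (toWeakSpace ℝ H '' W)) :
    ∃ C : ℝ, ∀ w ∈ W, ‖w‖ ≤ C := by
  have hpt : ∀ x : H, ∃ Cx : ℝ, ∀ w : W, ‖(innerSL ℝ (w : H)) x‖ ≤ Cx := by
    intro x
    have hcont : Continuous fun z : WeakSpace ℝ H => ⟪x, (toWeakSpace ℝ H).symm z⟫_ℝ :=
      WeakBilin.eval_continuous (topDualPairing ℝ H).flip (innerSL ℝ x)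
    have hcpt : IsCompact ((fun z : WeakSpace ℝ H => ⟪x, (toWeakSpace ℝ H).symm z⟫_ℝ)
        '' (toWeakSpace ℝ H '' W)) := hW.image hcont
    obtain ⟨Cx, hCx⟩ := hcpt.isBounded.exists_norm_le
    refine ⟨Cx, fun w => ?_⟩
    have hmem : ⟪x, (w : H)⟫_ℝ ∈ (fun z : WeakSpace ℝ H => ⟪x, (toWeakSpace ℝ H).symm z⟫_ℝ)
        '' (toWeakSpace ℝ H '' W) := by
      refine ⟨toWeakSpace ℝ H (w : H), ⟨(w : H), w.2, rfl⟩, ?_⟩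
      simp
    have := hCx _ hmem
    simpa [real_inner_comm] using this
  obtain ⟨C', hC'⟩ := banach_steinhaus hpt
  exact ⟨C', fun w hw => by simpa using hC' ⟨w, hw⟩⟩

end Bounds
section Net

variable {H : Type*} [NormedAddCommGroup H] [InnerProductSpace ℝ H]

set_option maxHeartbeats 1000000 in
lemma net_lemma (G : Subgroup (H ≃ₗᵢ[ℝ] H)) {W R : Set H} {C : ℝ}
    (hRne : R.Nonempty) (hC1 : 1 ≤ C)
    (hCR : ∀ r ∈ R, ‖r‖ ≤ C) (hCW : ∀ w ∈ W, ‖w‖ ≤ C)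
    (hRst : ∀ g ∈ G, ∀ r ∈ R, g r ∈ R)
    (hRk : ∀ k : ℕ, @IsCompact (Fin k → H)
      (ballTopology (fun x y => ⨅ g : G, ⨆ i, ‖x i - (g : H ≃ₗᵢ[ℝ] H) (y i)‖))
      {x | ∀ i, x i ∈ R})
    {ε : ℝ} (hε : 0 < ε) :
    ∃ V : Set H, V.Finite ∧ ∀ w ∈ W, ∃ v ∈ V, rho G R v w < ε := by
  haveI : Nonempty G := ⟨1⟩
  have hC0 : (0 : ℝ) < C := lt_of_lt_of_le one_pos hC1
  set ε' : ℝ := ε / 4 with hε'def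
  have hε' : 0 < ε' := by positivity
  set K : ℕ := ⌈C ^ 4 / ε' ^ 2⌉₊ with hKdef
  set A : ℝ := C ^ 2 / ε' with hAdef
  have hA0 : 0 < A := by positivity
  set δ : ℝ := ε' / ((K : ℝ) * A * C + 1) with hδdef
  have hδ0 : 0 < δ := by positivity
  have hδε' : δ ≤ ε' := by
    rw [hδdef]
    apply div_le_self hε'.le
    have : (0:ℝ) ≤ (K : ℝ) * A * C := by positivity
    linarith
  obtain ⟨t, ht⟩ := ballTopology_net _ _ (hRk K)
    (fun x _ => dtuple_self_nonpos G x) hδ0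
  set η : ℝ := ε' / ((K : ℝ) * C * (C + ε') + 1) with hηdef
  have hη0 : 0 < η := by positivity
  set M : ℤ := ⌈A / η⌉ with hMdef
  set D : Set ℝ := (fun j : ℤ => (j : ℝ) * η) '' (Set.Icc (-M) M) with hDdef
  have hDfin : D.Finite := (Set.finite_Icc _ _).image _
  have hgrid : ∀ a : ℝ, |a| ≤ A → ∃ b ∈ D, |a - b| ≤ η := by
    intro a haA
    set j : ℤ := ⌊a / η⌋ with hjdef
    refine ⟨(j : ℝ) * η, ⟨j, ?_, rfl⟩, ?_⟩
    · constructor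
      · rw [hMdef, ← Int.floor_neg]
        apply Int.floor_le_floor
        have hAa : -A ≤ a := by
          have := neg_abs_le a; linarith
        rw [← neg_div]
        gcongr
      · calc j ≤ ⌈a / η⌉ := Int.floor_le_ceil _
          _ ≤ M := by
            rw [hMdef]
            apply Int.ceil_le_ceil
            have : a ≤ A := (le_abs_self a).trans haA
            gcongr
    · have h1 : (j : ℝ) * η ≤ a := by
        have := Int.floor_le (a / η)
        rw [← hjdef] at this
        calc (j : ℝ) * η ≤ (a / η) * η := by
              exact mul_le_mul_of_nonneg_right this hη0.le
          _ = a := by field_simp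
      have h2 : a < ((j : ℝ) + 1) * η := by
        have := Int.lt_floor_add_one (a / η)
        rw [← hjdef] at this
        calc a = (a / η) * η := by field_simp
          _ < ((j : ℝ) + 1) * η := by
              exact mul_lt_mul_of_pos_right (by exact_mod_cast this) hη0
      rw [abs_le]
      constructor <;> nlinarith
  set V : Set H := {v : H | ∃ c ∈ t, ∃ b : Fin K → ℝ,
    (∀ i, b i ∈ D) ∧ v = ∑ i, b i • c i} with hVdef
  have hVfin : V.Finite := by
    have hsub : V ⊆ (fun p : (Fin K → H) × (Fin K → ℝ) => ∑ i, p.2 i • p.1 i) ''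
        ((t : Set (Fin K → H)) ×ˢ (Set.univ.pi fun _ : Fin K => D)) := by
      rintro v ⟨c, hct, b, hb, rfl⟩
      exact ⟨(c, b), ⟨hct, fun i _ => hb i⟩, rfl⟩
    exact (((t.finite_toSet).prod (Set.Finite.pi fun _ => hDfin)).image _).subset hsub
  refine ⟨V, hVfin, fun w hw => ?_⟩
  have hK : ‖w‖ ^ 2 ≤ (K : ℝ) * (ε' ^ 2 / C ^ 2) := by
    have h1 : C ^ 4 / ε' ^ 2 ≤ (K : ℝ) := Nat.le_ceil _
    have h2 : ‖w‖ ^ 2 ≤ C ^ 2 := by nlinarith [hCW w hw, norm_nonneg w]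
    calc ‖w‖ ^ 2 ≤ C ^ 2 := h2
      _ = (C ^ 4 / ε' ^ 2) * (ε' ^ 2 / C ^ 2) := by field_simp
      _ ≤ (K : ℝ) * (ε' ^ 2 / C ^ 2) :=
          mul_le_mul_of_nonneg_right h1 (by positivity)
  obtain ⟨a, r, hrR, ha, happ⟩ := greedy hRne hCR hC1 hε' K w (hCW w hw) hK
  obtain ⟨c, hct, hcd⟩ := ht r hrR
  obtain ⟨g, hg⟩ := exists_lt_of_ciInf_lt hcd
  have hgi : ∀ i, ‖c i - (g : H ≃ₗᵢ[ℝ] H) (r i)‖ < δ := fun i =>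
    lt_of_le_of_lt (le_ciSup (f := fun i => ‖c i - (g : H ≃ₗᵢ[ℝ] H) (r i)‖)
      ((Set.finite_range _).bddAbove) i) hg
  have hb : ∀ i : Fin K, ∃ b ∈ D, |a i - b| ≤ η := fun i => hgrid (a i) (ha i)
  choose b hbD hba using hb
  refine ⟨∑ i, b i • c i, ⟨c, hct, b, hbD, rfl⟩, ?_⟩
  have hle : rho G R (∑ i, b i • c i) w ≤ dR R (∑ i, b i • c i) ((g : H ≃ₗᵢ[ℝ] H) w) :=
    rho_le g _ w
  set p1 : H := ∑ i, b i • c i with hp1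
  set p2 : H := ∑ i, a i • c i with hp2
  set p3 : H := ∑ i, a i • (g : H ≃ₗᵢ[ℝ] H) (r i) with hp3
  set p4 : H := (g : H ≃ₗᵢ[ℝ] H) w with hp4
  have htri : dR R p1 p4 ≤ dR R p1 p2 + dR R p2 p3 + dR R p3 p4 := by
    have h1 := dR_triangle hCR p1 p2 p4
    have h2 := dR_triangle hCR p2 p3 p4
    linarith
  -- T1
  have hci : ∀ i, ‖c i‖ ≤ C + ε' := by
    intro i
    have h1 : ‖c i‖ ≤ ‖c i - (g : H ≃ₗᵢ[ℝ] H) (r i)‖ + ‖(g : H ≃ₗᵢ[ℝ] H) (r i)‖ := by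
      have he : c i = (c i - (g : H ≃ₗᵢ[ℝ] H) (r i)) + (g : H ≃ₗᵢ[ℝ] H) (r i) := by abel
      calc ‖c i‖ = ‖(c i - (g : H ≃ₗᵢ[ℝ] H) (r i)) + (g : H ≃ₗᵢ[ℝ] H) (r i)‖ :=
            congrArg norm he
        _ ≤ _ := norm_add_le _ _
    have h2 : ‖(g : H ≃ₗᵢ[ℝ] H) (r i)‖ = ‖r i‖ := (g : H ≃ₗᵢ[ℝ] H).norm_map _
    have h3 := hCR _ (hrR i)
    have h4 := hgi i
    linarith
  have hT1 : dR R p1 p2 ≤ ε' := by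
    have he : p1 - p2 = ∑ i, (b i - a i) • c i := by
      rw [hp1, hp2, ← Finset.sum_sub_distrib]
      congr 1
      funext i
      rw [sub_smul]
    have hnorm : ‖p1 - p2‖ ≤ (K : ℝ) * (η * (C + ε')) := by
      rw [he]
      calc ‖∑ i, (b i - a i) • c i‖ ≤ ∑ i : Fin K, ‖(b i - a i) • c i‖ :=
            norm_sum_le _ _
        _ ≤ ∑ _i : Fin K, η * (C + ε') := by
            apply Finset.sum_le_sum
            intro i _
            rw [norm_smul, Real.norm_eq_abs]
            have hab : |b i - a i| ≤ η := by
              rw [abs_sub_comm]; exact hba i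
            exact mul_le_mul hab (hci i) (norm_nonneg _) hη0.le
        _ = (K : ℝ) * (η * (C + ε')) := by
            rw [Finset.sum_const, Finset.card_univ, Fintype.card_fin, nsmul_eq_mul]
    have hbound : dR R p1 p2 ≤ C * ((K : ℝ) * (η * (C + ε'))) := by
      refine (normR_le_mul_norm hCR hC0.le _).trans ?_
      exact mul_le_mul_of_nonneg_left hnorm hC0.le
    have hfinal : C * ((K : ℝ) * (η * (C + ε'))) ≤ ε' := by
      have hS : (0:ℝ) ≤ (K : ℝ) * C * (C + ε') := by positivity
      have he2 : C * ((K : ℝ) * (η * (C + ε'))) = ((K : ℝ) * C * (C + ε')) * η := by ring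
      rw [he2, hηdef, mul_comm, div_mul_eq_mul_div, div_le_iff₀ (by positivity)]
      nlinarith [hε'.le]
    linarith
  -- T2
  have hT2 : dR R p2 p3 ≤ ε' := by
    have he : p2 - p3 = ∑ i, a i • (c i - (g : H ≃ₗᵢ[ℝ] H) (r i)) := by
      rw [hp2, hp3, ← Finset.sum_sub_distrib]
      congr 1
      funext i
      rw [smul_sub]
    have hnorm : ‖p2 - p3‖ ≤ (K : ℝ) * (A * δ) := by
      rw [he]
      calc ‖∑ i, a i • (c i - (g : H ≃ₗᵢ[ℝ] H) (r i))‖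
          ≤ ∑ i : Fin K, ‖a i • (c i - (g : H ≃ₗᵢ[ℝ] H) (r i))‖ := norm_sum_le _ _
        _ ≤ ∑ _i : Fin K, A * δ := by
            apply Finset.sum_le_sum
            intro i _
            rw [norm_smul, Real.norm_eq_abs]
            exact mul_le_mul (ha i) (hgi i).le (norm_nonneg _) hA0.le
        _ = (K : ℝ) * (A * δ) := by
            rw [Finset.sum_const, Finset.card_univ, Fintype.card_fin, nsmul_eq_mul]
    have hbound : dR R p2 p3 ≤ C * ((K : ℝ) * (A * δ)) := by
      refine (normR_le_mul_norm hCR hC0.le _).trans ?_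
      exact mul_le_mul_of_nonneg_left hnorm hC0.le
    have hfinal : C * ((K : ℝ) * (A * δ)) ≤ ε' := by
      have he2 : C * ((K : ℝ) * (A * δ)) = ((K : ℝ) * A * C) * δ := by ring
      rw [he2, hδdef, mul_comm, div_mul_eq_mul_div, div_le_iff₀ (by positivity)]
      nlinarith [hε'.le, show (0:ℝ) ≤ (K : ℝ) * A * C by positivity]
    linarith
  -- T3
  have hT3 : dR R p3 p4 ≤ ε' := by
    have he : p3 - p4 = (g : H ≃ₗᵢ[ℝ] H) ((∑ i, a i • r i) - w) := by
      rw [hp3, hp4, map_sub, map_sum]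
      exact sub_left_injective.eq_iff.mpr
        (Finset.sum_congr rfl fun i _ => ((g : H ≃ₗᵢ[ℝ] H).map_smul (a i) (r i)).symm)
    have : dR R p3 p4 = normR R ((∑ i, a i • r i) - w) := by
      rw [dR, he, normR_isom hCR hRst]
    rw [this, ← normR_neg, neg_sub]
    exact happ
  calc rho G R p1 w ≤ dR R p1 p4 := hle
    _ ≤ dR R p1 p2 + dR R p2 p3 + dR R p3 p4 := htri
    _ ≤ ε' + ε' + ε' := by linarith
    _ < ε := by rw [hε'def]; linarith

end Net

set_option maxHeartbeats 1000000 in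
/-- Let `H` be a real Hilbert space, `G` a group of orthogonal transformations
of `H`, and `W`, `R` `G`-stable subsets of `H` with `W` weakly compact and each orbit space
`R^k/G` (norm topology, diagonal action, i.e. the quotient pseudometric of the sup-metric)
compact.  Then `W`, equipped with the quotient pseudometric
`(d_R/G)(x,y) = inf_{g ∈ G} d_R(x, g·y)`, is compact. -/
theorem stmt0 {H : Type*} [NormedAddCommGroup H] [InnerProductSpace ℝ H] [CompleteSpace H]
    (G : Subgroup (H ≃ₗᵢ[ℝ] H)) (W R : Set H)
    (hWstable : ∀ g ∈ G, ∀ w ∈ W, g w ∈ W)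
    (hRstable : ∀ g ∈ G, ∀ r ∈ R, g r ∈ R)
    (hW : IsCompact (toWeakSpace ℝ H '' W))
    (hR : ∀ k : ℕ, @IsCompact (Fin k → H)
      (ballTopology (fun x y => ⨅ g : G, ⨆ i, ‖x i - (g : H ≃ₗᵢ[ℝ] H) (y i)‖))
      {x | ∀ i, x i ∈ R}) :
    @IsCompact H (ballTopology (fun x y => ⨅ g : G, dR R x ((g : H ≃ₗᵢ[ℝ] H) y))) W := by
  classical
  haveI : Nonempty G := ⟨1⟩
  show @IsCompact H (ballTopology (rho G R)) W
  rcases W.eq_empty_or_nonempty with rfl | hWne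
  · exact @isCompact_empty H (ballTopology (rho G R))
  rcases R.eq_empty_or_nonempty with rfl | hRne
  · -- degenerate case : `rho ≡ 0`, every ultrafilter converges to any point of `W`.
    obtain ⟨w₀, hw₀⟩ := hWne
    have hrho : ∀ x y : H, rho G (∅ : Set H) x y = 0 := by
      intro x y
      have h0 : ∀ g : G, dR (∅ : Set H) x ((g : H ≃ₗᵢ[ℝ] H) y) = 0 := by
        intro g
        rw [dR, normR, Real.iSup_of_isEmpty]
      simp only [rho, h0, ciInf_const]
    rw [@isCompact_iff_ultrafilter_le_nhds H (ballTopology (rho G (∅ : Set H))) W]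
    intro f hf
    refine ⟨w₀, hw₀, ?_⟩
    rw [show (ballTopology (rho G (∅ : Set H))) = TopologicalSpace.generateFrom
      {s | ∃ x ε, 0 < ε ∧ s = {y | rho G (∅ : Set H) x y < ε}} from rfl,
      TopologicalSpace.nhds_generateFrom]
    refine le_iInf₂ fun s hs => ?_
    obtain ⟨hw₀s, hsgen⟩ := hs
    obtain ⟨x, ε, hε, rfl⟩ := hsgen
    rw [Filter.le_principal_iff]
    have : {y : H | rho G (∅ : Set H) x y < ε} = Set.univ := by
      apply Set.eq_univ_of_forall
      intro y
      simp only [Set.mem_setOf_eq, hrho]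
      simpa [hrho] using hw₀s
    rw [this]
    exact Filter.univ_mem
  -- main case
  obtain ⟨C₁, hC₁1, hC₁R⟩ := Rbound G R (hR 1)
  obtain ⟨C₂, hC₂W⟩ := Wbound hW
  set C : ℝ := max C₁ C₂ with hCdef
  have hC1 : 1 ≤ C := hC₁1.trans (le_max_left _ _)
  have hCR : ∀ r ∈ R, ‖r‖ ≤ C := fun r hr => (hC₁R r hr).trans (le_max_left _ _)
  have hCW : ∀ w ∈ W, ‖w‖ ≤ C := fun w hw => (hC₂W w hw).trans (le_max_right _ _)
  haveI : Nonempty ↥R := hRne.to_subtype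
  rw [@isCompact_iff_ultrafilter_le_nhds H (ballTopology (rho G R)) W]
  intro f hf
  have hWf : W ∈ f := Filter.le_principal_iff.mp hf
  have hq0 : (0:ℝ) < 1/2 := by norm_num
  -- finite nets at all scales
  have hnet : ∀ t : ℕ, ∃ V : Set H, V.Finite ∧
      ∀ w ∈ W, ∃ v ∈ V, rho G R v w < (1/2 : ℝ) ^ t := fun t =>
    net_lemma G hRne hC1 hCR hCW hRstable hR (by positivity)
  choose V hVfin hVnet using hnet
  -- a ball at each scale belonging to the ultrafilter
  have hS : ∀ t : ℕ, ∃ vt : H,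
      ({w | rho G R vt w < (1/2 : ℝ) ^ t} ∩ W) ∈ f := by
    intro t
    have hcover : W ⊆ ⋃ v ∈ V t, {w | rho G R v w < (1/2 : ℝ) ^ t} := by
      intro w hw
      obtain ⟨v, hvV, hvw⟩ := hVnet t w hw
      exact Set.mem_biUnion hvV hvw
    have hmem : (⋃ v ∈ V t, {w | rho G R v w < (1/2 : ℝ) ^ t}) ∈ f :=
      Filter.mem_of_superset hWf hcover
    obtain ⟨v, hvV, hvf⟩ := (Ultrafilter.finite_biUnion_mem_iff (hVfin t)).mp hmem
    exact ⟨v, Filter.inter_mem hvf hWf⟩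
  choose v hv using hS
  -- points of W in these balls
  have hSne : ∀ t, ({w | rho G R (v t) w < (1/2 : ℝ) ^ t} ∩ W).Nonempty :=
    fun t => Ultrafilter.nonempty_of_mem (hv t)
  choose w hwS using hSne
  have hwW : ∀ t, w t ∈ W := fun t => (hwS t).2
  have hwv : ∀ t, rho G R (v t) (w t) < (1/2 : ℝ) ^ t := fun t => (hwS t).1
  -- consecutive points are close, pick group elements witnessing this
  have hcons : ∀ t : ℕ, ∃ g : G,
      dR R (w t) ((g : H ≃ₗᵢ[ℝ] H) (w (t+1))) < 3 * (1/2 : ℝ) ^ t := by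
    intro t
    obtain ⟨z, hz1, hz2⟩ :=
      Ultrafilter.nonempty_of_mem (Filter.inter_mem (hv t) (hv (t+1)))
    obtain ⟨hz1a, _⟩ := hz1
    obtain ⟨hz2a, _⟩ := hz2
    have h1 : rho G R (w t) (w (t+1)) < 3 * (1/2 : ℝ) ^ t := by
      have a1 : rho G R (w t) (v t) < (1/2 : ℝ) ^ t := by
        rw [rho_comm hCR hRstable]; exact hwv t
      have a3 : rho G R z (v (t+1)) < (1/2 : ℝ) ^ (t+1) := by
        rw [rho_comm hCR hRstable]; exact hz2a
      have a4 : rho G R (v (t+1)) (w (t+1)) < (1/2 : ℝ) ^ (t+1) := hwv (t+1)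
      have tr1 := rho_triangle hCR hRstable (w t) (v t) (w (t+1))
      have tr2 := rho_triangle hCR hRstable (v t) z (w (t+1))
      have tr3 := rho_triangle hCR hRstable z (v (t+1)) (w (t+1))
      have hpow : (1/2 : ℝ) ^ (t+1) = (1/2 : ℝ) ^ t * (1/2) := pow_succ _ _
      have a2 : rho G R (v t) z < (1/2 : ℝ) ^ t := hz1a
      linarith
    exact exists_lt_of_ciInf_lt h1
  choose gs hgs using hcons
  -- compose the group elements
  set hseq : ℕ → G := fun n => ((List.range n).map gs).prod with hseqdef
  have hseq_succ : ∀ n, hseq (n+1) = hseq n * gs n := by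
    intro n
    simp only [hseqdef, List.range_succ, List.map_append, List.prod_append,
      List.map_cons, List.map_nil, List.prod_cons, List.prod_nil, mul_one]
  set y : ℕ → H := fun t => ((hseq t : G) : H ≃ₗᵢ[ℝ] H) (w t) with hydef
  have hyt : ∀ t, y t = ((hseq t : G) : H ≃ₗᵢ[ℝ] H) (w t) := fun t => rfl
  have hyW : ∀ t, y t ∈ W := fun t => hWstable _ (hseq t).2 _ (hwW t)
  have hystep : ∀ t, dR R (y t) (y (t+1)) < 3 * (1/2 : ℝ) ^ t := by
    intro t
    have he : dR R (y t) (y (t+1))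
        = dR R (w t) (((gs t : G) : H ≃ₗᵢ[ℝ] H) (w (t+1))) := by
      rw [hyt t, hyt (t+1), hseq_succ, coe_mul_apply, dR_isom hCR hRstable (hseq t)]
    rw [he]
    exact hgs t
  -- tail estimate
  have htail : ∀ t s : ℕ, t ≤ s →
      dR R (y t) (y s) ≤ 6 * ((1/2 : ℝ) ^ t - (1/2 : ℝ) ^ s) := by
    intro t s hts
    induction s, hts using Nat.le_induction with
    | base => simp [dR_self]
    | succ s hts ih =>
      have h1 := dR_triangle hCR (y t) (y s) (y (s+1))
      have h2 := hystep s
      have h3 : (6:ℝ) * ((1/2 : ℝ) ^ t - (1/2 : ℝ) ^ (s+1))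
          = 6 * ((1/2 : ℝ) ^ t - (1/2 : ℝ) ^ s) + 3 * (1/2 : ℝ) ^ s := by
        rw [pow_succ]; ring
      linarith
  have htail' : ∀ t s : ℕ, t ≤ s → dR R (y t) (y s) ≤ 6 * (1/2 : ℝ) ^ t := by
    intro t s hts
    have := htail t s hts
    have hp := pow_pos hq0 s
    linarith
  -- weak cluster point of the sequence y
  set F : Filter (WeakSpace ℝ H) := Filter.map (fun t => toWeakSpace ℝ H (y t)) atTop
    with hFdef
  haveI : F.NeBot := Filter.map_neBot
  have hFle : F ≤ 𝓟 (toWeakSpace ℝ H '' W) := by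
    rw [hFdef, Filter.le_principal_iff, Filter.mem_map]
    exact Filter.Eventually.of_forall fun t => Set.mem_image_of_mem _ (hyW t)
  obtain ⟨bb, hbW, hbcl⟩ := hW hFle
  obtain ⟨yinf, hyinfW, hby⟩ := hbW
  -- dR-closeness of y t to the weak limit
  have hclose : ∀ t, dR R (y t) yinf ≤ 6 * (1/2 : ℝ) ^ t := by
    intro t
    rw [dR]
    refine ciSup_le fun r => ?_
    by_contra hcon
    push_neg at hcon
    have hη₀pos : 0 < |⟪(r : H), y t - yinf⟫_ℝ| - 6 * (1/2 : ℝ) ^ t := by linarith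
    have hcont : Continuous fun z : WeakSpace ℝ H =>
        ⟪(r : H), (toWeakSpace ℝ H).symm z⟫_ℝ :=
      WeakBilin.eval_continuous (topDualPairing ℝ H).flip (innerSL ℝ (r : H))
    have hU : (fun z : WeakSpace ℝ H => ⟪(r : H), (toWeakSpace ℝ H).symm z⟫_ℝ) ⁻¹'
        (Metric.ball (⟪(r : H), (toWeakSpace ℝ H).symm bb⟫_ℝ)
          (|⟪(r : H), y t - yinf⟫_ℝ| - 6 * (1/2 : ℝ) ^ t)) ∈ nhds bb :=
      hcont.continuousAt.preimage_mem_nhds (Metric.ball_mem_nhds _ hη₀pos)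
    have hV' : ((fun u => toWeakSpace ℝ H (y u)) '' (Set.Ici t)) ∈ F := by
      rw [hFdef, Filter.mem_map]
      exact Filter.mem_of_superset (Filter.Ici_mem_atTop t)
        (fun u hu => Set.mem_image_of_mem _ hu)
    haveI : (nhds bb ⊓ F).NeBot := hbcl
    obtain ⟨zz, hz1, hz2⟩ := Filter.nonempty_of_mem
      (Filter.inter_mem (Filter.mem_inf_of_left hU) (Filter.mem_inf_of_right hV'))
    obtain ⟨u, hu, rfl⟩ := hz2
    rw [Set.mem_preimage, Metric.mem_ball, Real.dist_eq, ← hby] at hz1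
    simp only [LinearEquiv.symm_apply_apply] at hz1
    have h1 : |⟪(r : H), y t - y u⟫_ℝ| ≤ dR R (y t) (y u) := inner_le_normR hCR r.2 _
    have h2 := htail' t u hu
    have h4 : |⟪(r : H), y t - yinf⟫_ℝ|
        ≤ |⟪(r : H), y t - y u⟫_ℝ| + |⟪(r : H), y u⟫_ℝ - ⟪(r : H), yinf⟫_ℝ| := by
      have h3 : ⟪(r : H), y t - yinf⟫_ℝ
          = ⟪(r : H), y t - y u⟫_ℝ + (⟪(r : H), y u⟫_ℝ - ⟪(r : H), yinf⟫_ℝ) := by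
        rw [inner_sub_right, inner_sub_right]; ring
      rw [h3]
      exact abs_add_le _ _
    linarith
  -- bound `rho (w t) yinf`
  have horbit : ∀ t, rho G R (w t) yinf ≤ 6 * (1/2 : ℝ) ^ t := by
    intro t
    have h1 : rho G R (w t) yinf ≤ dR R (((hseq t : G) : H ≃ₗᵢ[ℝ] H) (w t)) yinf :=
      rho_le_dR hCR hRstable (hseq t) _ _
    rw [← hyt t] at h1
    exact h1.trans (hclose t)
  -- the ultrafilter converges to yinf
  refine ⟨yinf, hyinfW, ?_⟩
  have hkey : ∀ ε : ℝ, 0 < ε → {z : H | rho G R yinf z < ε} ∈ f := by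
    intro ε hε
    obtain ⟨T, hT⟩ := exists_pow_lt_of_lt_one (show (0:ℝ) < ε/8 by linarith)
      (show (1/2 : ℝ) < 1 by norm_num)
    refine Filter.mem_of_superset (hv T) ?_
    rintro z ⟨hz1, hz2⟩
    have a1 : rho G R yinf (w T) ≤ 6 * (1/2 : ℝ) ^ T := by
      rw [rho_comm hCR hRstable]; exact horbit T
    have a2 : rho G R (w T) (v T) < (1/2 : ℝ) ^ T := by
      rw [rho_comm hCR hRstable]; exact hwv T
    have tr1 := rho_triangle hCR hRstable yinf (w T) z
    have tr2 := rho_triangle hCR hRstable (w T) (v T) z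
    show rho G R yinf z < ε
    have hz1' : rho G R (v T) z < (1/2 : ℝ) ^ T := hz1
    linarith
  rw [show (ballTopology (rho G R)) = TopologicalSpace.generateFrom
      {s | ∃ x ε, 0 < ε ∧ s = {y | rho G R x y < ε}} from rfl,
    TopologicalSpace.nhds_generateFrom]
  refine le_iInf₂ fun s hs => ?_
  obtain ⟨hys, hsgen⟩ := hs
  obtain ⟨x, ε, hε, rfl⟩ := hsgen
  rw [Filter.le_principal_iff]
  have hxy : rho G R x yinf < ε := hys
  have hpos : 0 < ε - rho G R x yinf := by linarith
  refine Filter.mem_of_superset (hkey _ hpos) ?_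
  intro z hz
  have tr := rho_triangle hCR hRstable x yinf z
  have hz' : rho G R yinf z < ε - rho G R x yinf := hz
  show rho G R x z < ε
  linarith
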